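/- The total number of admissible subsets of {1, ..., 2k} equals C(2k, k), where a subset I is admissible if |I ∩ {1,...,m}| ≤ m/2 for every m ∈ {1, ..., 2k}. -/

import Mathlib

open Classical in
/-- Admissible subsets of `{1,…,n}` of size `j`. -/
noncomputable def A (n j : ℕ) : Finset (Finset ℕ) :=
  (Finset.Icc 1 n).powerset.filter
    (fun I => I.card = j ∧ ∀ m ∈ Finset.Icc 1 n, 2 * (I ∩ Finset.Icc 1 m).card ≤ m)

lemma mem_A {n j : ℕ} {I : Finset ℕ} :
    I ∈ A n j ↔ I ⊆ Finset.Icc 1 n ∧ I.card = j ∧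
      ∀ m ∈ Finset.Icc 1 n, 2 * (I ∩ Finset.Icc 1 m).card ≤ m := by
  simp [A, and_assoc]

lemma A_bound {n j : ℕ} (hn : 1 ≤ n) {I : Finset ℕ} (h : I ∈ A n j) : 2 * j ≤ n := by
  obtain ⟨hsub, hcard, hcond⟩ := mem_A.mp h
  have := hcond n (by simp [hn])
  rwa [Finset.inter_eq_left.mpr hsub, hcard] at this

lemma A_eq_empty {n j : ℕ} (hn : 1 ≤ n) (h : n < 2 * j) : A n j = ∅ :=
  Finset.eq_empty_of_forall_notMem fun I hI => by have := A_bound hn hI; omega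

lemma A_zero (n : ℕ) : A n 0 = {∅} := by
  ext I
  simp only [mem_A, Finset.mem_singleton]
  constructor
  · rintro ⟨-, h, -⟩; exact Finset.card_eq_zero.mp h
  · rintro rfl
    refine ⟨Finset.empty_subset _, rfl, ?_⟩
    intro m hm
    simp only [Finset.mem_Icc] at hm
    simp only [Finset.empty_inter, Finset.card_empty]
    omega

lemma A_rec (n j : ℕ) (hn : 1 ≤ n) (hj : 2 * (j + 1) ≤ n + 1) :
    (A (n + 1) (j + 1)).card = (A n (j + 1)).card + (A n j).card := by
  have hni : ∀ m, m ≤ n → (n + 1) ∉ Finset.Icc 1 m := by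
    intro m hm; simp only [Finset.mem_Icc]; omega
  have e1 : (A (n + 1) (j + 1)).filter (fun I => (n + 1) ∉ I) = A n (j + 1) := by
    ext I
    simp only [Finset.mem_filter, mem_A]
    constructor
    · rintro ⟨⟨hsub, hcard, hcond⟩, hnot⟩
      refine ⟨?_, hcard, ?_⟩
      · intro x hx
        have hx2 := hsub hx
        simp only [Finset.mem_Icc] at hx2 ⊢
        have : x ≠ n + 1 := fun h => hnot (h ▸ hx)
        omega
      · intro m hm
        simp only [Finset.mem_Icc] at hm
        exact hcond m (by simp only [Finset.mem_Icc]; omega)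
    · rintro ⟨hsub, hcard, hcond⟩
      have hnot : (n + 1) ∉ I := fun h => by
        have := hsub h; simp only [Finset.mem_Icc] at this; omega
      refine ⟨⟨hsub.trans (Finset.Icc_subset_Icc_right (by omega)), hcard, ?_⟩, hnot⟩
      intro m hm
      simp only [Finset.mem_Icc] at hm
      by_cases hmn : m ≤ n
      · exact hcond m (by simp only [Finset.mem_Icc]; omega)
      · have hm1 : m = n + 1 := by omega
        rw [hm1, Finset.inter_eq_left.mpr (hsub.trans (Finset.Icc_subset_Icc_right (by omega))),
          hcard]
        omega
  have e2 : ((A (n + 1) (j + 1)).filter (fun I => (n + 1) ∈ I)).card = (A n j).card := by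
    apply Finset.card_bij (fun I _ => I.erase (n + 1))
    · intro I hI
      simp only [Finset.mem_filter, mem_A] at hI
      obtain ⟨⟨hsub, hcard, hcond⟩, hmem⟩ := hI
      refine mem_A.mpr ⟨?_, ?_, ?_⟩
      · intro x hx
        simp only [Finset.mem_erase] at hx
        have := hsub hx.2
        simp only [Finset.mem_Icc] at this ⊢
        have := hx.1
        omega
      · rw [Finset.card_erase_of_mem hmem, hcard]; omega
      · intro m hm
        simp only [Finset.mem_Icc] at hm
        have heq : I.erase (n + 1) ∩ Finset.Icc 1 m = I ∩ Finset.Icc 1 m := by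
          ext x
          simp only [Finset.mem_inter, Finset.mem_erase, Finset.mem_Icc]
          constructor
          · rintro ⟨⟨_, h2⟩, h3⟩; exact ⟨h2, h3⟩
          · rintro ⟨h2, h3⟩; exact ⟨⟨by omega, h2⟩, h3⟩
        rw [heq]
        exact hcond m (by simp only [Finset.mem_Icc]; omega)
    · intro I hI J hJ hIJ
      simp only [Finset.mem_filter] at hI hJ
      have : insert (n + 1) (I.erase (n + 1)) = insert (n + 1) (J.erase (n + 1)) := by rw [hIJ]
      rwa [Finset.insert_erase hI.2, Finset.insert_erase hJ.2] at this
    · intro J hJ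
      obtain ⟨hsub, hcard, hcond⟩ := mem_A.mp hJ
      have hnot : (n + 1) ∉ J := fun h => by
        have := hsub h; simp only [Finset.mem_Icc] at this; omega
      refine ⟨insert (n + 1) J, ?_, by rw [Finset.erase_insert hnot]⟩
      simp only [Finset.mem_filter, mem_A]
      refine ⟨⟨?_, ?_, ?_⟩, Finset.mem_insert_self _ _⟩
      · intro x hx
        rcases Finset.mem_insert.mp hx with h | h
        · simp only [Finset.mem_Icc]; omega
        · have := hsub h; simp only [Finset.mem_Icc] at this ⊢; omega
      · rw [Finset.card_insert_of_notMem hnot, hcard]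
      · intro m hm
        simp only [Finset.mem_Icc] at hm
        by_cases hmn : m ≤ n
        · have heq : insert (n + 1) J ∩ Finset.Icc 1 m = J ∩ Finset.Icc 1 m := by
            ext x
            simp only [Finset.mem_inter, Finset.mem_insert, Finset.mem_Icc]
            constructor
            · rintro ⟨h1 | h1, h2⟩
              · omega
              · exact ⟨h1, h2⟩
            · rintro ⟨h1, h2⟩; exact ⟨Or.inr h1, h2⟩
          rw [heq]
          exact hcond m (by simp only [Finset.mem_Icc]; omega)
        · have hm1 : m = n + 1 := by omega
          have hsub2 : insert (n + 1) J ⊆ Finset.Icc 1 (n + 1) := by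
            intro x hx
            rcases Finset.mem_insert.mp hx with h | h
            · simp only [Finset.mem_Icc]; omega
            · have := hsub h; simp only [Finset.mem_Icc] at this ⊢; omega
          rw [hm1, Finset.inter_eq_left.mpr hsub2,
            Finset.card_insert_of_notMem hnot, hcard]
          omega
  rw [← Finset.card_filter_add_card_filter_not (s := A (n + 1) (j + 1))
    (p := fun I => (n + 1) ∉ I)]
  simp only [not_not] at *
  rw [e1, e2]

lemma A_card : ∀ n, 1 ≤ n → ∀ j, 2 * (j + 1) ≤ n →
    (A n (j + 1)).card + Nat.choose n j = Nat.choose n (j + 1) := by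
  intro n
  induction n with
  | zero => omega
  | succ n ih =>
    intro _ j hj
    rcases Nat.eq_zero_or_pos n with rfl | hn
    · omega
    rw [A_rec n j hn hj]
    by_cases h2 : 2 * (j + 1) ≤ n
    · -- both terms via IH
      have ih1 := ih hn j h2
      rcases j with _ | j'
      · -- j = 0
        rw [A_zero]
        have hp := Nat.choose_succ_succ' n 0
        simp only [Finset.card_singleton, Nat.choose_zero_right] at *
        omega
      · have ih2 := ih hn j' (by omega)
        have hp1 := Nat.choose_succ_succ' n (j' + 1)
        have hp2 := Nat.choose_succ_succ' n j'
        omega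
    · -- 2*(j+1) = n+1, so A n (j+1) is empty and n = 2j+1
      have hn1 : n = 2 * j + 1 := by omega
      rw [A_eq_empty hn (by omega)]
      simp only [Finset.card_empty, Nat.zero_add]
      rcases j with _ | j'
      · -- n = 1
        have hn1' : n = 1 := by omega
        subst hn1'
        rw [A_zero]
        simp
      · have ih2 := ih hn j' (by omega)
        have hsym : Nat.choose n (j' + 1 + 1) = Nat.choose n (j' + 1) := by
          have h3 : n - (j' + 1) = j' + 1 + 1 := by omega
          rw [← h3, Nat.choose_symm (by omega)]
        have hp1 := Nat.choose_succ_succ' n (j' + 1)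
        have hp2 := Nat.choose_succ_succ' n j'
        omega

lemma A_sum (n : ℕ) (hn : 1 ≤ n) : ∀ J, 2 * J ≤ n →
    ∑ j ∈ Finset.range (J + 1), (A n j).card = Nat.choose n J := by
  intro J
  induction J with
  | zero => intro _; simp [A_zero]
  | succ J ih =>
    intro h
    rw [Finset.sum_range_succ, ih (by omega)]
    have := A_card n hn J h
    omega

theorem stmt_10 (k : ℕ) (hk : 0 < k) :
    Set.ncard {I : Finset ℕ | I ⊆ Finset.Icc 1 (2 * k) ∧
        ∀ m ∈ Finset.Icc 1 (2 * k), ((I ∩ Finset.Icc 1 m).card : ℚ) ≤ (m : ℚ) / 2} =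
      Nat.choose (2 * k) k := by
  have hrat : ∀ (c m : ℕ), ((c : ℚ) ≤ (m : ℚ) / 2 ↔ 2 * c ≤ m) := by
    intro c m
    rw [le_div_iff₀ (by norm_num : (0:ℚ) < 2), mul_comm]
    exact_mod_cast Iff.rfl
  have hset : {I : Finset ℕ | I ⊆ Finset.Icc 1 (2 * k) ∧
      ∀ m ∈ Finset.Icc 1 (2 * k), ((I ∩ Finset.Icc 1 m).card : ℚ) ≤ (m : ℚ) / 2} =
      ↑((Finset.range (k + 1)).biUnion (fun j => A (2 * k) j)) := by
    ext I
    simp only [Set.mem_setOf_eq, Finset.mem_coe, Finset.mem_biUnion, Finset.mem_range]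
    constructor
    · rintro ⟨hsub, hcond⟩
      have hcond' : ∀ m ∈ Finset.Icc 1 (2 * k), 2 * (I ∩ Finset.Icc 1 m).card ≤ m :=
        fun m hm => (hrat _ m).mp (hcond m hm)
      have hcardk : I.card ≤ k := by
        have h := hcond' (2 * k) (by simp only [Finset.mem_Icc]; omega)
        rw [Finset.inter_eq_left.mpr hsub] at h
        omega
      exact ⟨I.card, by omega, mem_A.mpr ⟨hsub, rfl, hcond'⟩⟩
    · rintro ⟨j, _, hI⟩
      obtain ⟨hsub, _, hcond⟩ := mem_A.mp hI
      exact ⟨hsub, fun m hm => (hrat _ m).mpr (hcond m hm)⟩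
  rw [hset, Set.ncard_coe_finset]
  rw [Finset.card_biUnion]
  · exact A_sum (2 * k) (by omega) k (le_refl _)
  · intro x _ y _ hxy
    rw [Function.onFun, Finset.disjoint_left]
    intro I hIx hIy
    exact hxy ((mem_A.mp hIx).2.1.symm.trans (mem_A.mp hIy).2.1)
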